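/- Let A and A' be nonnegative self-adjoint operators on a complex Hilbert space H. Then the modified Hausdorff distance of their spectra satisfies d̃_H(σ(A), σ(A')) ≤ ‖(A + I)^{-1} − (A' + I)^{-1}‖, where d̃_H(X,Y) = d_H({(1+x)^{-1} : x ∈ X}, {(1+y)^{-1} : y ∈ Y}). -/

import Mathlib

/- A nonnegative self-adjoint (possibly unbounded) operator `A` on a complex Hilbert
space is encoded by its resolvent `B = (A + I)⁻¹`, a bounded self-adjoint operator with
`σ(B) ⊆ (0,1]`; then `σ(A) = {x ≥ 0 : (1+x)⁻¹ ∈ σ(B)}` and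
`‖(A+I)⁻¹ − (A'+I)⁻¹‖ = ‖B − B'‖`. -/

/-- The spectrum of the nonnegative self-adjoint operator whose resolvent is `B`. -/
def resSpec {H : Type*} [NormedAddCommGroup H] [InnerProductSpace ℂ H] [CompleteSpace H]
    (B : H →L[ℂ] H) : Set ℝ :=
  {x : ℝ | 0 ≤ x ∧ (1 + x)⁻¹ ∈ spectrum ℝ B}

open Metric
open scoped NNReal ENNReal Pointwise

/-- Key lemma: the resolvent-distance bounds the pointwise spectral distance for
self-adjoint operators. -/
lemma infDist_spectrum_le {H : Type*} [NormedAddCommGroup H] [InnerProductSpace ℂ H]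
    [CompleteSpace H] {B B' : H →L[ℂ] H} (hB' : IsSelfAdjoint B')
    {l : ℝ} (hl : l ∈ spectrum ℝ B) :
    Metric.infDist l (spectrum ℝ B') ≤ ‖B - B'‖ := by
  by_contra h
  push_neg at h
  set d := Metric.infDist l (spectrum ℝ B') with hd
  have hd0 : 0 < d := lt_of_le_of_lt (norm_nonneg _) h
  have hlnot : l ∉ spectrum ℝ B' := by
    intro hmem
    have : d = 0 := by rw [hd]; exact Metric.infDist_zero_of_mem hmem
    simp [this] at hd0
  rw [spectrum.notMem_iff] at hlnot
  obtain ⟨u, hu⟩ := hlnot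
  -- C := algebraMap ℝ _ l - B' is self-adjoint
  have hCsa : IsSelfAdjoint ((algebraMap ℝ (H →L[ℂ] H)) l - B') := by
    refine IsSelfAdjoint.sub ?_ hB'
    rw [Algebra.algebraMap_eq_smul_one]
    exact IsSelfAdjoint.smul (star_trivial l) (IsSelfAdjoint.one _)
  have hinvsa : IsSelfAdjoint ((↑u⁻¹ : H →L[ℂ] H)) := by
    have h1 : (↑u⁻¹ : H →L[ℂ] H) = Ring.inverse (↑u : H →L[ℂ] H) := (Ring.inverse_unit u).symm
    rw [h1, isSelfAdjoint_iff, ← Ring.inverse_star]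
    congr 1
    rw [hu]
    exact hCsa.star_eq
  -- spectrum of u⁻¹
  have hspecC : spectrum ℝ (↑u : H →L[ℂ] H) = (({l} : Set ℝ) - spectrum ℝ B' : Set ℝ) := by
    rw [hu]; exact (spectrum.singleton_sub_eq B' l).symm
  have hspecInv : spectrum ℝ (↑u⁻¹ : H →L[ℂ] H) = (spectrum ℝ (↑u : H →L[ℂ] H))⁻¹ :=
    (spectrum.map_inv u).symm
  -- spectral radius bound
  have hrad : spectralRadius ℝ (↑u⁻¹ : H →L[ℂ] H) ≤ ENNReal.ofReal d⁻¹ := by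
    rw [spectralRadius]
    refine iSup₂_le fun μ hμ => ?_
    rw [hspecInv, hspecC, Set.mem_inv] at hμ
    obtain ⟨x, hx, s, hs, hxs⟩ := hμ
    rw [Set.mem_singleton_iff] at hx
    rw [hx] at hxs
    change l - s = μ⁻¹ at hxs
    have hds : d ≤ |l - s| := by
      have := Metric.infDist_le_dist_of_mem (x := l) hs
      rwa [Real.dist_eq] at this
    have hne : l - s ≠ 0 := fun h0 => by
      rw [h0, abs_zero] at hds; exact absurd hds (not_le.mpr hd0)
    have hμeq : μ = (l - s)⁻¹ := by
      rw [hxs]; exact (inv_inv μ).symm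
    have hle : ‖μ‖ ≤ d⁻¹ := by
      rw [hμeq, Real.norm_eq_abs, abs_inv]
      exact inv_anti₀ hd0 hds
    calc (‖μ‖₊ : ℝ≥0∞) = ENNReal.ofReal ‖μ‖ := (ofReal_norm μ).symm
      _ ≤ ENNReal.ofReal d⁻¹ := ENNReal.ofReal_le_ofReal hle
  have hnorm : ‖(↑u⁻¹ : H →L[ℂ] H)‖ ≤ d⁻¹ := by
    rw [← hinvsa.toReal_spectralRadius_eq_norm]
    exact ENNReal.toReal_le_of_le_ofReal (inv_nonneg.mpr hd0.le) hrad
  -- Neumann series argument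
  have hsmall : ‖(↑u⁻¹ : H →L[ℂ] H) * (B - B')‖ < 1 := by
    calc ‖(↑u⁻¹ : H →L[ℂ] H) * (B - B')‖ ≤ ‖(↑u⁻¹ : H →L[ℂ] H)‖ * ‖B - B'‖ := norm_mul_le _ _
      _ ≤ d⁻¹ * ‖B - B'‖ := by
          exact mul_le_mul_of_nonneg_right hnorm (norm_nonneg _)
      _ < d⁻¹ * d := by
          exact mul_lt_mul_of_pos_left h (inv_pos.mpr hd0)
      _ = 1 := inv_mul_cancel₀ hd0.ne'
  have hunit : IsUnit ((algebraMap ℝ (H →L[ℂ] H)) l - B) := by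
    have key : (algebraMap ℝ (H →L[ℂ] H)) l - B
        = (↑u : H →L[ℂ] H) * (1 - (↑u⁻¹ : H →L[ℂ] H) * (B - B')) := by
      rw [mul_sub, mul_one, ← mul_assoc, u.mul_inv, one_mul, hu]
      abel
    rw [key]
    exact (u.isUnit).mul (Units.oneSub _ hsmall).isUnit
  exact spectrum.notMem_iff.mpr hunit hl

lemma image_resSpec {H : Type*} [NormedAddCommGroup H] [InnerProductSpace ℂ H]
    [CompleteSpace H] {B : H →L[ℂ] H} (hsB : spectrum ℝ B ⊆ Set.Ioc 0 1) :
    (fun x : ℝ => (1 + x)⁻¹) '' resSpec B = spectrum ℝ B := by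
  ext t
  constructor
  · rintro ⟨x, ⟨hx0, hxmem⟩, rfl⟩
    exact hxmem
  · intro ht
    obtain ⟨ht0, ht1⟩ := hsB ht
    refine ⟨t⁻¹ - 1, ⟨by
      have h1 : (1:ℝ) ≤ t⁻¹ := one_le_inv₀ ht0 |>.mpr ht1
      linarith, ?_⟩, ?_⟩
    · rw [show (1 : ℝ) + (t⁻¹ - 1) = t⁻¹ by ring, inv_inv]; exact ht
    · show (1 + (t⁻¹ - 1))⁻¹ = t
      rw [show (1 : ℝ) + (t⁻¹ - 1) = t⁻¹ by ring, inv_inv]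

/-- For nonnegative self-adjoint operators `A, A'` (given via their resolvents `B, B'`),
`d̃_H(σ(A), σ(A')) ≤ ‖(A+I)⁻¹ − (A'+I)⁻¹‖`, where
`d̃_H(X,Y) = d_H({(1+x)⁻¹ : x ∈ X}, {(1+y)⁻¹ : y ∈ Y})`. -/
theorem stmt5 {H : Type*} [NormedAddCommGroup H] [InnerProductSpace ℂ H] [CompleteSpace H]
    (B B' : H →L[ℂ] H) (hB : IsSelfAdjoint B) (hB' : IsSelfAdjoint B')
    (hsB : spectrum ℝ B ⊆ Set.Ioc 0 1) (hsB' : spectrum ℝ B' ⊆ Set.Ioc 0 1) :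
    Metric.hausdorffDist
      ((fun x : ℝ => (1 + x)⁻¹) '' resSpec B)
      ((fun x : ℝ => (1 + x)⁻¹) '' resSpec B')
      ≤ ‖B - B'‖ := by
  rw [image_resSpec hsB, image_resSpec hsB']
  refine Metric.hausdorffDist_le_of_infDist (norm_nonneg _) ?_ ?_
  · exact fun x hx => infDist_spectrum_le hB' hx
  · intro x hx
    rw [← norm_sub_rev]
    exact infDist_spectrum_le hB hx
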